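/- The derivative of the logarithmic polynomial satisfies d/dx R_p^k(x) = p·R_{p−1}^k(x) for all p ≥ 1 and all k ∈ ℤ. -/

import Mathlib

/-- The logarithmic polynomials `R_p^k`. -/
noncomputable def logPoly : ℕ → ℤ → ℝ → ℝ
  | 0, k, _ => if k = 0 then 1 else 0
  | p + 1, k, x =>
      (1 / 2) * logPoly p (k - 1) x + x * logPoly p k x + (1 / 2) * logPoly p (k + 1) x

lemma logPoly_hasDerivAt (p : ℕ) (k : ℤ) (x : ℝ) :
    HasDerivAt (fun t : ℝ => logPoly p k t) ((p : ℝ) * logPoly (p - 1) k x) x := by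
  induction p generalizing k x with
  | zero =>
      simp only [Nat.cast_zero, zero_mul]
      exact (hasDerivAt_const x _).congr_deriv rfl
  | succ p ih =>
      have h1 := ((ih (k - 1) x).const_mul (1 / 2 : ℝ))
      have h2 : HasDerivAt (fun t : ℝ => t * logPoly p k t)
          (1 * logPoly p k x + x * ((p : ℝ) * logPoly (p - 1) k x)) x :=
        (hasDerivAt_id x).mul (ih k x)
      have h3 := ((ih (k + 1) x).const_mul (1 / 2 : ℝ))
      have h := (h1.add h2).add h3
      have heq : (fun t : ℝ => logPoly (p + 1) k t)
          = fun t : ℝ => (1 / 2) * logPoly p (k - 1) t + t * logPoly p k t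
              + (1 / 2) * logPoly p (k + 1) t := by
        funext t; simp [logPoly]
      rw [heq]
      refine h.congr_deriv ?_
      cases p with
      | zero => simp [logPoly]
      | succ q =>
          simp only [Nat.add_sub_cancel, logPoly]
          push_cast
          ring

theorem logPoly_deriv (p : ℕ) (hp : 1 ≤ p) (k : ℤ) (x : ℝ) :
    deriv (fun t : ℝ => logPoly p k t) x = p * logPoly (p - 1) k x :=
  (logPoly_hasDerivAt p k x).deriv
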